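/- Let p ∈ [1,∞) and suppose the equation −y′ + qy = f is correctly solvable in L_p(ℝ) (so that ∫_ℝ q = ∞ and d(x) is well-defined). Then d₀ := sup_{x∈ℝ} d(x) < ∞. -/

import Mathlib

open MeasureTheory Filter Topology
open scoped ENNReal

/-- `y` is a solution of `-y' + q y = f` on `ℝ`: it is locally absolutely
continuous and its a.e. derivative `y'` equals `q y - f`. -/
def IsSolution (q f y : ℝ → ℝ) : Prop :=
  LocallyIntegrable (fun t => q t * y t - f t) volume ∧
  ∀ a b : ℝ, y b - y a = ∫ t in a..b, (q t * y t - f t)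

/-- The equation `-y' + q y = f` is correctly solvable in `L_p(ℝ)`. -/
def CorrectlySolvableLp (q : ℝ → ℝ) (p : ℝ≥0∞) : Prop :=
  ∃ c : ℝ, 0 < c ∧ ∀ f : ℝ → ℝ, MemLp f p volume →
    (∃! y : ℝ → ℝ, IsSolution q f y ∧ MemLp y p volume) ∧
    ∀ y : ℝ → ℝ, IsSolution q f y → MemLp y p volume →
      eLpNorm y p volume ≤ ENNReal.ofReal c * eLpNorm f p volume

/-- The function `d(x) = inf { d > 0 : ∫_{x-d}^{x+d} q = 2 }`. -/
noncomputable def dq (q : ℝ → ℝ) (x : ℝ) : ℝ :=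
  sInf {d : ℝ | 0 < d ∧ ∫ t in x - d..x + d, q t = 2}

/-- Auxiliary: on an interval where the mass of `q` is at most `1/2`, a solution of
`y' = q y - g` with `g ≥ 0` satisfies `y t ≤ 2 * max (y u) 0`. -/
lemma piece_bound (q y g : ℝ → ℝ) (hq : ∀ t, 0 ≤ q t) (hg : ∀ t, 0 ≤ g t)
    (hqi : ∀ a b : ℝ, IntervalIntegrable q volume a b)
    (hqyi : ∀ a b : ℝ, IntervalIntegrable (fun t => q t * y t) volume a b)
    (hgi : ∀ a b : ℝ, IntervalIntegrable g volume a b)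
    (hy : ∀ a b : ℝ, y b - y a = ∫ t in a..b, (q t * y t - g t))
    (hyc : Continuous y)
    (u v : ℝ) (huv : u ≤ v) (hmass : ∫ t in u..v, q t ≤ 1/2) :
    ∀ t ∈ Set.Icc u v, y t ≤ 2 * max (y u) 0 := by
  obtain ⟨t₀, ht₀mem, ht₀max⟩ :=
    isCompact_Icc.exists_isMaxOn (Set.nonempty_Icc.2 huv) hyc.continuousOn
  rw [isMaxOn_iff] at ht₀max
  have hmax : ∀ t ∈ Set.Icc u v, y t ≤ y t₀ := ht₀max
  have hut₀ : u ≤ t₀ := ht₀mem.1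
  have ht₀v : t₀ ≤ v := ht₀mem.2
  set M : ℝ := max (y t₀) 0 with hM
  have hM0 : 0 ≤ M := le_max_right _ _
  -- the key estimate for the maximum point
  have h1 : y t₀ - y u = ∫ t in u..t₀, (q t * y t - g t) := hy u t₀
  have h2 : ∫ t in u..t₀, (q t * y t - g t) ≤ ∫ t in u..t₀, q t * M := by
    apply intervalIntegral.integral_mono_on hut₀
      ((hqyi u t₀).sub (hgi u t₀)) ((hqi u t₀).mul_const M)
    intro t ht
    have hty : y t ≤ M := le_trans (hmax t ⟨ht.1, le_trans ht.2 ht₀v⟩) (le_max_left _ _)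
    have : q t * y t ≤ q t * M := mul_le_mul_of_nonneg_left hty (hq t)
    have hgt := hg t
    linarith
  have h3 : ∫ t in u..t₀, q t * M = (∫ t in u..t₀, q t) * M :=
    intervalIntegral.integral_mul_const M q
  have h4 : ∫ t in u..t₀, q t ≤ 1/2 := by
    have hadd := intervalIntegral.integral_add_adjacent_intervals (hqi u t₀) (hqi t₀ v)
    have hnn : 0 ≤ ∫ t in t₀..v, q t :=
      intervalIntegral.integral_nonneg ht₀v (fun t _ => hq t)
    linarith
  have h5 : (∫ t in u..t₀, q t) * M ≤ (1/2) * M :=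
    mul_le_mul_of_nonneg_right h4 hM0
  have hkey : y t₀ ≤ y u + (1/2) * M := by
    have := h1
    linarith
  intro t ht
  rcases le_or_gt (y t₀) 0 with hneg | hpos
  · have := hmax t ht
    have h20 : 0 ≤ 2 * max (y u) 0 := by positivity
    linarith
  · have hMt : M = y t₀ := max_eq_left hpos.le
    rw [hMt] at hkey
    have hyu : y t₀ ≤ 2 * y u := by linarith
    have : y u ≤ max (y u) 0 := le_max_left _ _
    have := hmax t ht
    linarith

/-- Auxiliary: an ENNReal cancellation contradiction. -/
lemma ennreal_contra {c k L T r : ℝ} (hc : 0 < c) (hL : 0 < L) (hT : T ≤ 4 * L)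
    (hk : 4 < k) (hr : 1 ≤ r)
    (h : ENNReal.ofReal (k * c) * (ENNReal.ofReal L) ^ (1/r)
        ≤ ENNReal.ofReal c * (ENNReal.ofReal T) ^ (1/r)) : False := by
  have hrpos : 0 < r := lt_of_lt_of_le one_pos hr
  have hinv0 : (0:ℝ) ≤ 1/r := by positivity
  have hinv1 : 1/r ≤ 1 := by rw [div_le_one hrpos]; exact hr
  set X : ℝ≥0∞ := (ENNReal.ofReal L) ^ (1/r) with hX
  have hX0 : X ≠ 0 :=
    (ENNReal.rpow_pos (ENNReal.ofReal_pos.2 hL) ENNReal.ofReal_ne_top).ne'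
  have hXtop : X ≠ ⊤ := ENNReal.rpow_ne_top_of_nonneg hinv0 ENNReal.ofReal_ne_top
  have h2 : (ENNReal.ofReal T) ^ (1/r) ≤ ENNReal.ofReal 4 * X := by
    calc (ENNReal.ofReal T) ^ (1/r)
        ≤ (ENNReal.ofReal (4 * L)) ^ (1/r) :=
          ENNReal.rpow_le_rpow (ENNReal.ofReal_le_ofReal hT) hinv0
      _ = (ENNReal.ofReal 4 * ENNReal.ofReal L) ^ (1/r) := by
          rw [ENNReal.ofReal_mul (by norm_num : (0:ℝ) ≤ 4)]
      _ = (ENNReal.ofReal 4) ^ (1/r) * X := ENNReal.mul_rpow_of_nonneg _ _ hinv0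
      _ ≤ ENNReal.ofReal 4 * X := by
          apply mul_le_mul_left
          have h14 : (1:ℝ≥0∞) ≤ ENNReal.ofReal 4 := ENNReal.one_le_ofReal.2 (by norm_num)
          calc (ENNReal.ofReal 4) ^ (1/r) ≤ (ENNReal.ofReal 4) ^ (1:ℝ) :=
                ENNReal.rpow_le_rpow_of_exponent_le h14 hinv1
            _ = ENNReal.ofReal 4 := ENNReal.rpow_one _
  have h3 : ENNReal.ofReal (k * c) * X ≤ ENNReal.ofReal (c * 4) * X := by
    calc ENNReal.ofReal (k * c) * X
        ≤ ENNReal.ofReal c * (ENNReal.ofReal T) ^ (1/r) := h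
      _ ≤ ENNReal.ofReal c * (ENNReal.ofReal 4 * X) := mul_le_mul_right h2 _
      _ = ENNReal.ofReal (c * 4) * X := by
          rw [ENNReal.ofReal_mul hc.le, mul_assoc]
  have h4' := (ENNReal.mul_le_mul_iff_left hX0 hXtop).1 h3
  have h5 : k * c ≤ c * 4 := (ENNReal.ofReal_le_ofReal_iff (by positivity)).1 h4'
  nlinarith

/-- Auxiliary: a lower bound on the `eLpNorm` of `y` from a pointwise lower bound
on an interval. -/
lemma indicator_lower {y : ℝ → ℝ} {p : ℝ≥0∞} (hp0 : p ≠ 0) (hptop : p ≠ ∞)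
    {u v m : ℝ} (hm : 0 ≤ m) (h : ∀ t ∈ Set.Icc u v, m ≤ |y t|) :
    ENNReal.ofReal m * (ENNReal.ofReal (v - u)) ^ (1/p.toReal)
      ≤ eLpNorm y p volume := by
  have hmono : eLpNorm ((Set.Icc u v).indicator fun _ => m) p volume
      ≤ eLpNorm y p volume := by
    apply eLpNorm_mono
    intro t
    by_cases ht : t ∈ Set.Icc u v
    · rw [Set.indicator_of_mem ht]
      rw [Real.norm_eq_abs, Real.norm_eq_abs, abs_of_nonneg hm]
      exact h t ht
    · rw [Set.indicator_of_notMem ht]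
      simp
  rwa [eLpNorm_indicator_const measurableSet_Icc hp0 hptop, Real.volume_Icc,
    Real.enorm_eq_ofReal hm] at hmono

set_option maxHeartbeats 2000000 in
theorem stmt7 (q : ℝ → ℝ) (hq : ∀ x, 0 ≤ q x)
    (hqloc : LocallyIntegrable q volume)
    (p : ℝ≥0∞) (hp : 1 ≤ p) (hptop : p ≠ ∞)
    (hsolv : CorrectlySolvableLp q p) :
    BddAbove (Set.range (dq q)) := by
  obtain ⟨c, hc, hmain⟩ := hsolv
  have hp0 : p ≠ 0 := (lt_of_lt_of_le zero_lt_one hp).ne'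
  have hr1 : 1 ≤ p.toReal := by
    have h := ENNReal.toReal_mono hptop hp
    rwa [ENNReal.toReal_one] at h
  set A : ℝ := 228 * c + 8 with hA
  have hApos : 0 < A := by positivity
  have hqi : ∀ a b : ℝ, IntervalIntegrable q volume a b := by
    intro a b
    rw [intervalIntegrable_iff]
    exact (hqloc.integrableOn_isCompact isCompact_uIcc).mono_set Set.uIoc_subset_uIcc
  -- Key claim: every window of radius A carries q-mass at least 2.
  have key : ∀ x : ℝ, (2:ℝ) ≤ ∫ t in x - A..x + A, q t := by
    intro x
    by_contra hlt
    push_neg at hlt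
    set sI : Set ℝ := Set.Icc (x - A) (x + A) with hsI
    set f : ℝ → ℝ := sI.indicator (fun _ => (1:ℝ)) with hf
    have hf0 : ∀ t, 0 ≤ f t := fun t => Set.indicator_nonneg (fun _ _ => zero_le_one) t
    have hfmem : MemLp f p volume := by
      apply memLp_indicator_const p measurableSet_Icc
      exact Or.inr (by rw [Real.volume_Icc]; exact ENNReal.ofReal_ne_top)
    obtain ⟨⟨y, ⟨hysol, hyLp⟩, -⟩, hbound⟩ := hmain f hfmem
    have hyb := hbound y hysol hyLp
    obtain ⟨hloc, hint⟩ := hysol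
    have hfint : Integrable f volume := by
      rw [hf, integrable_indicator_iff measurableSet_Icc]
      exact integrableOn_const (by rw [Real.volume_Icc]; exact ENNReal.ofReal_ne_top) (by simp)
    have hfi : ∀ a b : ℝ, IntervalIntegrable f volume a b := fun a b =>
      hfint.intervalIntegrable
    have hhi : ∀ a b : ℝ, IntervalIntegrable (fun t => q t * y t - f t) volume a b := by
      intro a b
      rw [intervalIntegrable_iff]
      exact (hloc.integrableOn_isCompact isCompact_uIcc).mono_set Set.uIoc_subset_uIcc
    have hqyi : ∀ a b : ℝ, IntervalIntegrable (fun t => q t * y t) volume a b := by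
      intro a b
      have := (hhi a b).add (hfi a b)
      simpa using this
    have hyc : Continuous y := by
      have hcont := intervalIntegral.continuous_primitive hhi 0
      exact ((continuous_const (y := y 0)).add hcont).congr
        (fun b => by have h := hint 0 b; simp only [Pi.add_apply]; linarith)
    -- norm of f
    have hfnorm : eLpNorm f p volume ≤ ENNReal.ofReal (2 * A) ^ (1/p.toReal) := by
      rw [hf, eLpNorm_indicator_const measurableSet_Icc hp0 hptop, Real.volume_Icc]
      have h2A : x + A - (x - A) = 2 * A := by ring
      rw [h2A]
      simp
    have hyb' : eLpNorm y p volume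
        ≤ ENNReal.ofReal c * ENNReal.ofReal (2 * A) ^ (1/p.toReal) :=
      hyb.trans (mul_le_mul_right hfnorm _)
    -- find a point a in [x-A, x-A/2] where |y| ≤ 5c
    have hstep : ∃ a ∈ Set.Icc (x - A) (x - A/2), |y a| ≤ 5 * c := by
      by_contra hcon
      push_neg at hcon
      have hlow : ∀ t ∈ Set.Icc (x - A) (x - A/2), 5 * c ≤ |y t| :=
        fun t ht => (hcon t ht).le
      have h1 := indicator_lower hp0 hptop (by positivity) hlow
      have h2 : x - A/2 - (x - A) = A/2 := by ring
      rw [h2] at h1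
      exact ennreal_contra hc (by positivity) (by linarith) (by norm_num) hr1
        (h1.trans hyb')
    obtain ⟨a, ⟨ha1, ha2⟩, hya⟩ := hstep
    set e : ℝ := x + A with he
    have hae : a ≤ e := by simp only [he]; linarith
    set W : ℝ := ∫ t in a..e, q t with hW
    have hW0 : 0 ≤ W := intervalIntegral.integral_nonneg hae (fun t _ => hq t)
    have hW2 : W < 2 := by
      have hadd := intervalIntegral.integral_add_adjacent_intervals
        (hqi (x - A) a) (hqi a e)
      have hnn : 0 ≤ ∫ t in (x - A)..a, q t :=
        intervalIntegral.integral_nonneg ha1 (fun t _ => hq t)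
      have : (∫ t in (x - A)..e, q t) < 2 := hlt
      linarith
    set Q : ℝ → ℝ := fun t => ∫ s in a..t, q s with hQ
    have hQc : Continuous Q := intervalIntegral.continuous_primitive hqi a
    have hQa : Q a = 0 := intervalIntegral.integral_same
    have hQe : Q e = W := rfl
    have hQdiff : ∀ u v : ℝ, ∫ t in u..v, q t = Q v - Q u := by
      intro u v
      have := intervalIntegral.integral_add_adjacent_intervals (hqi a u) (hqi u v)
      simp only [hQ]
      linarith
    have hQmono : ∀ u v : ℝ, u ≤ v → Q u ≤ Q v := by
      intro u v huv
      have h := hQdiff u v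
      have h2 : 0 ≤ ∫ t in u..v, q t :=
        intervalIntegral.integral_nonneg huv (fun t _ => hq t)
      linarith
    -- choose subdivision points
    obtain ⟨t₁, ht₁, hQt₁⟩ : ∃ t₁ ∈ Set.Icc a e, Q t₁ = W/4 := by
      have hsub := intermediate_value_Icc hae hQc.continuousOn
      have : W/4 ∈ Set.Icc (Q a) (Q e) := by
        rw [hQa, hQe]; constructor <;> linarith
      obtain ⟨t₁, ht₁, h⟩ := hsub this
      exact ⟨t₁, ht₁, h⟩
    obtain ⟨t₂, ht₂, hQt₂⟩ : ∃ t₂ ∈ Set.Icc t₁ e, Q t₂ = W/2 := by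
      have hsub := intermediate_value_Icc ht₁.2 hQc.continuousOn
      have : W/2 ∈ Set.Icc (Q t₁) (Q e) := by
        rw [hQt₁, hQe]; constructor <;> linarith
      obtain ⟨t₂, ht₂, h⟩ := hsub this
      exact ⟨t₂, ht₂, h⟩
    obtain ⟨t₃, ht₃, hQt₃⟩ : ∃ t₃ ∈ Set.Icc t₂ e, Q t₃ = 3*W/4 := by
      have hsub := intermediate_value_Icc ht₂.2 hQc.continuousOn
      have : 3*W/4 ∈ Set.Icc (Q t₂) (Q e) := by
        rw [hQt₂, hQe]; constructor <;> linarith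
      obtain ⟨t₃, ht₃, h⟩ := hsub this
      exact ⟨t₃, ht₃, h⟩
    have hP := piece_bound q y f hq hf0 hqi hqyi hfi hint hyc
    have hp1 : ∀ t ∈ Set.Icc a t₁, y t ≤ 2 * max (y a) 0 :=
      hP a t₁ ht₁.1 (by rw [hQdiff, hQt₁, hQa]; linarith)
    have hp2 : ∀ t ∈ Set.Icc t₁ t₂, y t ≤ 2 * max (y t₁) 0 :=
      hP t₁ t₂ ht₂.1 (by rw [hQdiff, hQt₂, hQt₁]; linarith)
    have hp3 : ∀ t ∈ Set.Icc t₂ t₃, y t ≤ 2 * max (y t₂) 0 :=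
      hP t₂ t₃ ht₃.1 (by rw [hQdiff, hQt₃, hQt₂]; linarith)
    have hp4 : ∀ t ∈ Set.Icc t₃ e, y t ≤ 2 * max (y t₃) 0 :=
      hP t₃ e ht₃.2 (by rw [hQdiff, hQt₃, hQe]; linarith)
    set M0 : ℝ := max (y a) 0 with hM0def
    have hM00 : 0 ≤ M0 := le_max_right _ _
    have m1 : max (y t₁) 0 ≤ 2 * M0 :=
      max_le (hp1 t₁ ⟨ht₁.1, le_refl _⟩) (by linarith)
    have m2 : max (y t₂) 0 ≤ 4 * M0 :=
      max_le ((hp2 t₂ ⟨ht₂.1, le_refl _⟩).trans (by linarith)) (by linarith)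
    have m3 : max (y t₃) 0 ≤ 8 * M0 :=
      max_le ((hp3 t₃ ⟨ht₃.1, le_refl _⟩).trans (by linarith)) (by linarith)
    have hsup : ∀ t ∈ Set.Icc a e, y t ≤ 16 * M0 := by
      intro t ht
      rcases le_total t t₁ with h|h
      · have := hp1 t ⟨ht.1, h⟩; linarith
      · rcases le_total t t₂ with h'|h'
        · have := hp2 t ⟨h, h'⟩; linarith
        · rcases le_total t t₃ with h''|h''
          · have := hp3 t ⟨h', h''⟩; linarith
          · have := hp4 t ⟨h'', ht.2⟩; linarith
    have hM5 : M0 ≤ 5 * c := max_le (le_trans (le_abs_self _) hya) (by positivity)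
    -- lower estimate on [x + A/4, e]
    have hlow2 : ∀ b ∈ Set.Icc (x + A/4) e, 6 * c ≤ |y b| := by
      intro b hb
      have hab : a ≤ b := by
        have hb1 := hb.1
        simp only [he] at *
        nlinarith [hApos]
      have hbe : b ≤ e := hb.2
      have heq := hint a b
      have hsplit : ∫ t in a..b, (q t * y t - f t)
          = (∫ t in a..b, q t * y t) - ∫ t in a..b, f t :=
        intervalIntegral.integral_sub (hqyi a b) (hfi a b)
      have hff : ∫ t in a..b, f t = b - a := by
        have heqon : Set.EqOn f (fun _ => (1:ℝ)) (Set.uIcc a b) := by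
          intro t ht
          rw [Set.uIcc_of_le hab] at ht
          have htm : t ∈ sI := by
            rw [hsI]
            constructor
            · linarith [ht.1]
            · have := ht.2; simp only [he] at hbe; linarith
          rw [hf, Set.indicator_of_mem htm]
        rw [intervalIntegral.integral_congr heqon, intervalIntegral.integral_const]
        simp
      have hqyb : ∫ t in a..b, q t * y t ≤ 2 * (16 * M0) := by
        have hstep1 : ∫ t in a..b, q t * y t ≤ ∫ t in a..b, q t * (16 * M0) := by
          apply intervalIntegral.integral_mono_on hab (hqyi a b)
            ((hqi a b).mul_const _)
          intro t ht
          exact mul_le_mul_of_nonneg_left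
            (hsup t ⟨ht.1, le_trans ht.2 hbe⟩) (hq t)
        have hstep2 : ∫ t in a..b, q t * (16 * M0)
            = (∫ t in a..b, q t) * (16 * M0) :=
          intervalIntegral.integral_mul_const _ q
        have hstep3 : (∫ t in a..b, q t) ≤ W := by
          rw [hQdiff, hQa]
          have := hQmono b e hbe
          rw [hQe] at this
          linarith
        have hstep4 : (∫ t in a..b, q t) * (16 * M0) ≤ 2 * (16 * M0) := by
          apply mul_le_mul_of_nonneg_right _ (by linarith)
          linarith
        linarith
      have hba : (3:ℝ)*A/4 ≤ b - a := by
        have hb1 := hb.1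
        simp only [he] at *
        linarith
      have hya' : y a ≤ 5 * c := le_trans (le_abs_self _) hya
      have hyb2 : y b ≤ -(6*c) := by
        have : y b = y a + ((∫ t in a..b, q t * y t) - (b - a)) := by
          rw [← hff, ← hsplit]; linarith
        have hA34 : (3:ℝ)*A/4 = 171*c + 6 := by rw [hA]; ring
        nlinarith [hM5, hM00]
      calc 6 * c ≤ -(y b) := by linarith
        _ ≤ |y b| := neg_le_abs _
    have h1 := indicator_lower hp0 hptop (by positivity) hlow2
    have h2 : e - (x + A/4) = 3*A/4 := by simp only [he]; ring
    rw [h2] at h1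
    exact ennreal_contra hc (by positivity) (by linarith) (by norm_num) hr1
      (h1.trans hyb')
  -- From the key claim, dq q x ≤ A for every x, by the intermediate value theorem.
  have hbdd : ∀ x : ℝ, dq q x ≤ A := by
    intro x
    have hGc := intervalIntegral.continuous_primitive hqi 0
    have hFeq : ∀ d : ℝ, (∫ t in x - d..x + d, q t)
        = (∫ t in (0:ℝ)..(x + d), q t) - ∫ t in (0:ℝ)..(x - d), q t := by
      intro d
      have h := intervalIntegral.integral_add_adjacent_intervals
        (hqi 0 (x - d)) (hqi (x - d) (x + d))
      linarith
    have hFc : Continuous fun d : ℝ => ∫ t in x - d..x + d, q t := by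
      have h : Continuous fun d : ℝ =>
          (∫ t in (0:ℝ)..(x + d), q t) - ∫ t in (0:ℝ)..(x - d), q t :=
        (hGc.comp (continuous_const.add continuous_id)).sub
          (hGc.comp (continuous_const.sub continuous_id))
      exact h.congr (fun d => (hFeq d).symm)
    have hF0 : (∫ t in x - (0:ℝ)..x + (0:ℝ), q t) = 0 := by
      norm_num [intervalIntegral.integral_same]
    have h2mem : (2:ℝ) ∈ Set.Icc (∫ t in x - (0:ℝ)..x + (0:ℝ), q t) (∫ t in x - A..x + A, q t) := by
      rw [hF0]; exact ⟨by norm_num, key x⟩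
    obtain ⟨d, hdmem, hFd⟩ :=
      intermediate_value_Icc hApos.le hFc.continuousOn h2mem
    have hFd' : (∫ t in x - d..x + d, q t) = 2 := hFd
    have hd0 : 0 < d := by
      rcases lt_or_eq_of_le hdmem.1 with h|h
      · exact h
      · exfalso
        rw [← h] at hFd'
        rw [hF0] at hFd'
        norm_num at hFd'
    have hle : dq q x ≤ d := by
      apply csInf_le
      · exact ⟨0, fun z hz => hz.1.le⟩
      · exact ⟨hd0, hFd'⟩
    linarith [hdmem.2]
  exact ⟨A, by rintro z ⟨x, rfl⟩; exact hbdd x⟩
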